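/- Let $0 < p \le 1$ and let $X$ be a $p$-Banach space containing a normalized basic sequence $(x_j)_{j=1}^\infty$ equivalent to the unit vector basis of $\ell_p$. Then for every $\epsilon > 0$ there is a normalized block basic sequence $(y_k)_{k=1}^\infty$ of $(x_j)$ such that $\|\sum_{k} a_k y_k\| \ge (1-\epsilon)(\sum_k |a_k|^p)^{1/p}$ for every finitely supported sequence of scalars $(a_k)$. -/

import Mathlib

theorem aux_sum_Ioc_blocks {M : Type*} [AddCommMonoid M] (m : ℕ → ℕ) (hm : Monotone m)
    (f : ℕ → M) (N : ℕ) :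
    ∑ k ∈ Finset.range N, ∑ j ∈ Finset.Ioc (m k) (m (k + 1)), f j
      = ∑ j ∈ Finset.Ioc (m 0) (m N), f j := by
  induction N with
  | zero => simp
  | succ N ih =>
      rw [Finset.sum_range_succ, ih,
        Finset.sum_Ioc_consecutive _ (hm (Nat.zero_le N)) (hm (Nat.le_succ N))]

/-- James's `ℓ_p` distortion theorem for `0 < p ≤ 1`. -/
theorem stmt_6
    (p : ℝ) (hp : 0 < p) (hp1 : p ≤ 1)
    (X : Type*) [AddCommGroup X] [Module ℝ X] [MetricSpace X] [CompleteSpace X]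
    (n : X → ℝ)
    (hnn : ∀ v, 0 ≤ n v)
    (heq : ∀ v, n v = 0 ↔ v = 0)
    (hhom : ∀ (c : ℝ) v, n (c • v) = |c| * n v)
    (htri : ∀ v w, n (v + w) ^ p ≤ n v ^ p + n w ^ p)
    (hdist : ∀ v w : X, dist v w = n (v - w) ^ p)
    (x : ℕ → X) (hnorm : ∀ j, n (x j) = 1)
    (c C : ℝ) (hc : 0 < c) (hC : 0 < C)
    (hequiv : ∀ (N : ℕ) (a : ℕ → ℝ),
      c * (∑ j ∈ Finset.range N, |a j| ^ p) ^ (1 / p) ≤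
          n (∑ j ∈ Finset.range N, a j • x j) ∧
        n (∑ j ∈ Finset.range N, a j • x j) ≤
          C * (∑ j ∈ Finset.range N, |a j| ^ p) ^ (1 / p)) :
    ∀ ε : ℝ, 0 < ε →
      ∃ (m : ℕ → ℕ) (b : ℕ → ℝ) (y : ℕ → X),
        StrictMono m ∧
        (∀ k, y k = ∑ j ∈ Finset.Ioc (m k) (m (k + 1)), b j • x j) ∧
        (∀ k, n (y k) = 1) ∧
        (∀ (N : ℕ) (a : ℕ → ℝ),
          (1 - ε) * (∑ k ∈ Finset.range N, |a k| ^ p) ^ (1 / p) ≤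
            n (∑ k ∈ Finset.range N, a k • y k)) := by
  intro ε hε
  set ε' : ℝ := min ε (1 / 2) with hε'def
  have hε'pos : 0 < ε' := lt_min hε (by norm_num)
  have hε'lt : ε' < 1 := lt_of_le_of_lt (min_le_right _ _) (by norm_num)
  have hε'le : ε' ≤ ε := min_le_left _ _
  -- extension lemmas
  have hsub : ∀ (m M : ℕ), Finset.Ioc m M ⊆ Finset.range (M + 1) :=
    fun m M j hj => Finset.mem_range.mpr (Nat.lt_succ_of_le (Finset.mem_Ioc.mp hj).2)
  have hvec_ext : ∀ (m M : ℕ) (b : ℕ → ℝ),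
      ∑ j ∈ Finset.range (M + 1), (if j ∈ Finset.Ioc m M then b j else 0) • x j
        = ∑ j ∈ Finset.Ioc m M, b j • x j := by
    intro m M b
    simp only [ite_smul, zero_smul]
    rw [← Finset.sum_filter, Finset.filter_mem_eq_inter,
      Finset.inter_eq_right.mpr (hsub m M)]
  have habs_ext : ∀ (m M : ℕ) (b : ℕ → ℝ),
      ∑ j ∈ Finset.range (M + 1), |if j ∈ Finset.Ioc m M then b j else 0| ^ p
        = ∑ j ∈ Finset.Ioc m M, |b j| ^ p := by
    intro m M b
    have h : ∀ j, |if j ∈ Finset.Ioc m M then b j else 0| ^ p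
        = if j ∈ Finset.Ioc m M then |b j| ^ p else 0 := by
      intro j; split_ifs with h
      · rfl
      · simp [Real.zero_rpow hp.ne']
    simp_rw [h]
    rw [← Finset.sum_filter, Finset.filter_mem_eq_inter,
      Finset.inter_eq_right.mpr (hsub m M)]
  -- lower bound for block sums
  have hble : ∀ (m M : ℕ) (b : ℕ → ℝ),
      c * (∑ j ∈ Finset.Ioc m M, |b j| ^ p) ^ (1 / p)
        ≤ n (∑ j ∈ Finset.Ioc m M, b j • x j) := by
    intro m M b
    have := (hequiv (M + 1) (fun j => if j ∈ Finset.Ioc m M then b j else 0)).1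
    rwa [hvec_ext, habs_ext] at this
  -- the sets T m and their infima
  obtain ⟨T, hTdef⟩ : ∃ T : ℕ → Set ℝ, ∀ m t, t ∈ T m ↔ ∃ (M : ℕ) (b : ℕ → ℝ),
      (∑ j ∈ Finset.Ioc m M, |b j| ^ p) = 1 ∧
        t = n (∑ j ∈ Finset.Ioc m M, b j • x j) :=
    ⟨fun m => {t | ∃ (M : ℕ) (b : ℕ → ℝ), (∑ j ∈ Finset.Ioc m M, |b j| ^ p) = 1 ∧
        t = n (∑ j ∈ Finset.Ioc m M, b j • x j)}, fun _ _ => Iff.rfl⟩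
  have hTone : ∀ m, (1 : ℝ) ∈ T m := by
    intro m
    rw [hTdef]
    refine ⟨m + 1, fun _ => 1, ?_, ?_⟩
    · simp [Nat.Ioc_succ_singleton]
    · simp [Nat.Ioc_succ_singleton, hnorm]
  have hTne : ∀ m, (T m).Nonempty := fun m => ⟨1, hTone m⟩
  have hTlb : ∀ m, ∀ t ∈ T m, c ≤ t := by
    intro m t ht
    obtain ⟨M, b, hb1, rfl⟩ := (hTdef m t).mp ht
    have := hble m M b
    rwa [hb1, Real.one_rpow, mul_one] at this
  have hTbdd : ∀ m, BddBelow (T m) := fun m => ⟨c, hTlb m⟩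
  obtain ⟨lam, hlamdef⟩ : ∃ lam : ℕ → ℝ, ∀ m, lam m = sInf (T m) := ⟨_, fun _ => rfl⟩
  have hlamc : ∀ m, c ≤ lam m := fun m => (hlamdef m) ▸ le_csInf (hTne m) (hTlb m)
  have hlam1 : ∀ m, lam m ≤ 1 := fun m => (hlamdef m) ▸ csInf_le (hTbdd m) (hTone m)
  have hbddA : BddAbove (Set.range lam) := ⟨1, by rintro _ ⟨m, rfl⟩; exact hlam1 m⟩
  set L : ℝ := ⨆ m, lam m with hLdef
  have hLge : ∀ m, lam m ≤ L := fun m => le_ciSup hbddA m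
  have hLpos : 0 < L := lt_of_lt_of_le hc (le_trans (hlamc 0) (hLge 0))
  set δ : ℝ := ε' * L / 2 with hδdef
  have hδpos : 0 < δ := by positivity
  have hLδpos : 0 < L + δ := by linarith
  obtain ⟨m0, hm0lam⟩ : ∃ m0, L - δ < lam m0 :=
    exists_lt_of_lt_ciSup (by linarith : L - δ < ⨆ m, lam m)
  -- the recursive step
  have hstep : ∀ mk : ℕ, ∃ (M : ℕ), ∃ b : ℕ → ℝ, mk < M ∧
      (∑ j ∈ Finset.Ioc mk M, |b j| ^ p) = 1 ∧
      n (∑ j ∈ Finset.Ioc mk M, b j • x j) < L + δ := by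
    intro mk
    have hlt : sInf (T mk) < L + δ := by
      rw [← hlamdef mk]; exact lt_of_le_of_lt (hLge mk) (by linarith)
    obtain ⟨t, ht, htlt⟩ := exists_lt_of_csInf_lt (hTne mk) hlt
    obtain ⟨M, b, hb1, rfl⟩ := (hTdef mk t).mp ht
    refine ⟨M, b, ?_, hb1, htlt⟩
    by_contra h
    rw [Finset.Ioc_eq_empty h, Finset.sum_empty] at hb1
    norm_num at hb1
  choose M B hMgt hBsum hBlt using hstep
  obtain ⟨m, hm0, hms⟩ : ∃ m : ℕ → ℕ, m 0 = m0 ∧ ∀ k, m (k + 1) = M (m k) :=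
    ⟨fun k => Nat.rec m0 (fun _ prev => M prev) k, rfl, fun _ => rfl⟩
  have hmS : StrictMono m :=
    strictMono_nat_of_lt_succ fun k => (hms k) ▸ hMgt (m k)
  have hmMono : Monotone m := hmS.monotone
  -- uniqueness of blocks
  have huniq : ∀ k k' j : ℕ, m k < j → j ≤ m (k + 1) → m k' < j → j ≤ m (k' + 1) →
      k' = k := by
    intro k k' j h1 h2 h1' h2'
    by_contra hne
    rcases lt_or_gt_of_ne hne with h | h
    · exact absurd (lt_of_le_of_lt (le_trans h2' (hmMono (Nat.succ_le_of_lt h))) h1)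
        (lt_irrefl j)
    · exact absurd (lt_of_le_of_lt (le_trans h2 (hmMono (Nat.succ_le_of_lt h))) h1')
        (lt_irrefl j)
  have key_ite : ∀ (g : ℕ → ℝ) (k j : ℕ), m k < j → j ≤ m (k + 1) →
      (∑ k' ∈ Finset.range j, if m k' < j ∧ j ≤ m (k' + 1) then g k' else 0) = g k := by
    intro g k j h1 h2
    have hkj : k ∈ Finset.range j := Finset.mem_range.mpr (lt_of_le_of_lt hmS.le_apply h1)
    rw [Finset.sum_eq_single_of_mem k hkj]
    · rw [if_pos ⟨h1, h2⟩]
    · intro k' _ hne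
      rw [if_neg]
      rintro ⟨h1', h2'⟩
      exact hne (huniq k k' j h1 h2 h1' h2')
  -- the blocks z and their norms
  obtain ⟨z, hzdef⟩ : ∃ z : ℕ → X, ∀ k,
      z k = ∑ j ∈ Finset.Ioc (m k) (m (k + 1)), B (m k) j • x j := ⟨_, fun _ => rfl⟩
  have hzsum : ∀ k, (∑ j ∈ Finset.Ioc (m k) (m (k + 1)), |B (m k) j| ^ p) = 1 := by
    intro k; rw [hms k]; exact hBsum (m k)
  have hznlt : ∀ k, n (z k) < L + δ := by
    intro k
    have := hBlt (m k)
    rw [← hms k, ← hzdef k] at this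
    exact this
  have hzpos : ∀ k, 0 < n (z k) := by
    intro k
    have h := hble (m k) (m (k + 1)) (B (m k))
    rw [hzsum k, Real.one_rpow, mul_one, ← hzdef k] at h
    exact lt_of_lt_of_le hc h
  -- the coefficients b and blocks y
  obtain ⟨b, hbdef⟩ : ∃ b : ℕ → ℝ, ∀ j, b j = ∑ k' ∈ Finset.range j,
      if m k' < j ∧ j ≤ m (k' + 1) then B (m k') j / n (z k') else 0 := ⟨_, fun _ => rfl⟩
  have hbval : ∀ k j, m k < j → j ≤ m (k + 1) → b j = B (m k) j / n (z k) := by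
    intro k j h1 h2
    rw [hbdef]
    exact key_ite (fun k' => B (m k') j / n (z k')) k j h1 h2
  obtain ⟨y, hydef⟩ : ∃ y : ℕ → X, ∀ k,
      y k = ∑ j ∈ Finset.Ioc (m k) (m (k + 1)), b j • x j := ⟨_, fun _ => rfl⟩
  have hyz : ∀ k, y k = (n (z k))⁻¹ • z k := by
    intro k
    have hterm : ∀ j ∈ Finset.Ioc (m k) (m (k + 1)),
        b j • x j = (n (z k))⁻¹ • (B (m k) j • x j) := by
      intro j hj
      obtain ⟨h1, h2⟩ := Finset.mem_Ioc.mp hj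
      rw [hbval k j h1 h2, div_eq_inv_mul, mul_smul]
    rw [hydef, Finset.sum_congr rfl hterm, ← Finset.smul_sum, ← hzdef]
  have hynorm : ∀ k, n (y k) = 1 := by
    intro k
    rw [hyz, hhom, abs_inv, abs_of_pos (hzpos k), inv_mul_cancel₀ (hzpos k).ne']
  have hbsum : ∀ k, (∑ j ∈ Finset.Ioc (m k) (m (k + 1)), |b j| ^ p) = 1 / n (z k) ^ p := by
    intro k
    rw [← hzsum k, Finset.sum_div]
    refine Finset.sum_congr rfl fun j hj => ?_
    obtain ⟨h1, h2⟩ := Finset.mem_Ioc.mp hj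
    rw [hbval k j h1 h2, abs_div, abs_of_pos (hzpos k),
      Real.div_rpow (abs_nonneg _) (hnn _)]
  -- key lower bound on combinations supported past m0
  have hkey : ∀ (M₁ : ℕ) (d : ℕ → ℝ),
      lam m0 * (∑ j ∈ Finset.Ioc m0 M₁, |d j| ^ p) ^ (1 / p)
        ≤ n (∑ j ∈ Finset.Ioc m0 M₁, d j • x j) := by
    intro M₁ d
    set S := ∑ j ∈ Finset.Ioc m0 M₁, |d j| ^ p with hS
    have hS0 : 0 ≤ S := Finset.sum_nonneg fun j _ => Real.rpow_nonneg (abs_nonneg _) p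
    rcases eq_or_lt_of_le hS0 with h0 | hSpos
    · rw [← h0, Real.zero_rpow (one_div_pos.mpr hp).ne', mul_zero]
      exact hnn _
    · set s1 := S ^ (1 / p) with hs1
      have hs1pos : 0 < s1 := Real.rpow_pos_of_pos hSpos _
      have hsum1 : ∑ j ∈ Finset.Ioc m0 M₁, |d j / s1| ^ p = 1 := by
        have hterm : ∀ j, |d j / s1| ^ p = |d j| ^ p / S := by
          intro j
          rw [abs_div, abs_of_pos hs1pos, Real.div_rpow (abs_nonneg _) hs1pos.le, hs1,
            ← Real.rpow_mul hS0, one_div_mul_cancel hp.ne', Real.rpow_one]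
        rw [Finset.sum_congr rfl fun j _ => hterm j, ← Finset.sum_div, ← hS,
          div_self hSpos.ne']
      have hmem : n (∑ j ∈ Finset.Ioc m0 M₁, (d j / s1) • x j) ∈ T m0 :=
        (hTdef m0 _).mpr ⟨M₁, fun j => d j / s1, hsum1, rfl⟩
      have hinf : lam m0 ≤ n (∑ j ∈ Finset.Ioc m0 M₁, (d j / s1) • x j) := by
        rw [hlamdef]; exact csInf_le (hTbdd m0) hmem
      have hscale : (∑ j ∈ Finset.Ioc m0 M₁, d j • x j)
          = s1 • ∑ j ∈ Finset.Ioc m0 M₁, (d j / s1) • x j := by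
        rw [Finset.smul_sum]
        refine Finset.sum_congr rfl fun j _ => ?_
        rw [smul_smul, mul_comm, div_mul_cancel₀ _ hs1pos.ne']
      calc lam m0 * S ^ (1 / p) = s1 * lam m0 := by rw [← hs1, mul_comm]
        _ ≤ s1 * n (∑ j ∈ Finset.Ioc m0 M₁, (d j / s1) • x j) :=
            mul_le_mul_of_nonneg_left hinf hs1pos.le
        _ = n (s1 • ∑ j ∈ Finset.Ioc m0 M₁, (d j / s1) • x j) := by
            rw [hhom, abs_of_pos hs1pos]
        _ = n (∑ j ∈ Finset.Ioc m0 M₁, d j • x j) := by rw [← hscale]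
  -- conclusion
  refine ⟨m, b, y, hmS, hydef, hynorm, ?_⟩
  intro N a
  obtain ⟨d, hddef⟩ : ∃ d : ℕ → ℝ, ∀ j, d j = ∑ k' ∈ Finset.range j,
      if m k' < j ∧ j ≤ m (k' + 1) then a k' * b j else 0 := ⟨_, fun _ => rfl⟩
  have hdval : ∀ k j, m k < j → j ≤ m (k + 1) → d j = a k * b j := by
    intro k j h1 h2
    rw [hddef]
    exact key_ite _ k j h1 h2
  have hvec : ∑ j ∈ Finset.Ioc (m 0) (m N), d j • x j
      = ∑ k ∈ Finset.range N, a k • y k := by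
    rw [← aux_sum_Ioc_blocks m hmMono (fun j => d j • x j) N]
    refine Finset.sum_congr rfl fun k _ => ?_
    rw [hydef, Finset.smul_sum]
    refine Finset.sum_congr rfl fun j hj => ?_
    obtain ⟨h1, h2⟩ := Finset.mem_Ioc.mp hj
    rw [hdval k j h1 h2, mul_smul]
  have habs : ∑ j ∈ Finset.Ioc (m 0) (m N), |d j| ^ p
      = ∑ k ∈ Finset.range N, |a k| ^ p * (1 / n (z k) ^ p) := by
    rw [← aux_sum_Ioc_blocks m hmMono (fun j => |d j| ^ p) N]
    refine Finset.sum_congr rfl fun k _ => ?_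
    rw [← hbsum k, Finset.mul_sum]
    refine Finset.sum_congr rfl fun j hj => ?_
    obtain ⟨h1, h2⟩ := Finset.mem_Ioc.mp hj
    rw [hdval k j h1 h2, abs_mul, Real.mul_rpow (abs_nonneg _) (abs_nonneg _)]
  set s := ∑ k ∈ Finset.range N, |a k| ^ p with hsdef
  have hs0 : 0 ≤ s := Finset.sum_nonneg fun k _ => Real.rpow_nonneg (abs_nonneg _) p
  have hmono1 : s / (L + δ) ^ p ≤ ∑ k ∈ Finset.range N, |a k| ^ p * (1 / n (z k) ^ p) := by
    have hrw : s / (L + δ) ^ p = ∑ k ∈ Finset.range N, |a k| ^ p * (1 / (L + δ) ^ p) := by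
      rw [← Finset.sum_mul, ← hsdef, mul_one_div]
    rw [hrw]
    refine Finset.sum_le_sum fun k _ => ?_
    refine mul_le_mul_of_nonneg_left ?_ (Real.rpow_nonneg (abs_nonneg _) p)
    exact one_div_le_one_div_of_le (Real.rpow_pos_of_pos (hzpos k) p)
      (Real.rpow_le_rpow (hnn _) (hznlt k).le hp.le)
  have hlampos : 0 ≤ lam m0 := le_trans hc.le (hlamc m0)
  have hq : (s / (L + δ) ^ p) ^ (1 / p) = s ^ (1 / p) / (L + δ) := by
    rw [Real.div_rpow hs0 (Real.rpow_nonneg hLδpos.le p), ← Real.rpow_mul hLδpos.le,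
      mul_one_div_cancel hp.ne', Real.rpow_one]
  have hfinal : lam m0 * (s / (L + δ) ^ p) ^ (1 / p)
      ≤ n (∑ k ∈ Finset.range N, a k • y k) := by
    calc lam m0 * (s / (L + δ) ^ p) ^ (1 / p)
        ≤ lam m0 * (∑ j ∈ Finset.Ioc (m 0) (m N), |d j| ^ p) ^ (1 / p) := by
          refine mul_le_mul_of_nonneg_left ?_ hlampos
          refine Real.rpow_le_rpow (by positivity) ?_ (by positivity)
          rw [habs]; exact hmono1
      _ ≤ n (∑ j ∈ Finset.Ioc (m 0) (m N), d j • x j) := by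
          rw [hm0]; exact hkey (m N) d
      _ = n (∑ k ∈ Finset.range N, a k • y k) := by rw [hvec]
  have hratio : 1 - ε ≤ lam m0 / (L + δ) := by
    rw [le_div_iff₀ hLδpos]
    nlinarith [mul_nonneg (sub_nonneg.mpr hε'le) hLδpos.le,
      mul_nonneg hε'pos.le hδpos.le]
  calc (1 - ε) * s ^ (1 / p)
      ≤ (lam m0 / (L + δ)) * s ^ (1 / p) :=
        mul_le_mul_of_nonneg_right hratio (Real.rpow_nonneg hs0 _)
    _ = lam m0 * (s ^ (1 / p) / (L + δ)) := by ring
    _ = lam m0 * (s / (L + δ) ^ p) ^ (1 / p) := by rw [hq]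
    _ ≤ n (∑ k ∈ Finset.range N, a k • y k) := hfinal
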